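/- Let L : ℝ → ℝ be differentiable and convex. Define the perspective function F(j,m) = m·L(j/m) for m > 0. Then for all j, j₀ ∈ ℝ and m, m₀ > 0, the inequality ∂F/∂j(j,m)·j₀ + ∂F/∂m(j,m)·m₀ ≤ F(j₀,m₀) holds, where ∂F/∂j(j,m) = L'(j/m) and ∂F/∂m(j,m) = L(j/m) − (j/m)·L'(j/m). -/
import Mathlib

/-- Tangent line inequality for a convex differentiable function. -/
lemma tangent_le (L : ℝ → ℝ) (hLd : Differentiable ℝ L) (hLc : ConvexOn ℝ Set.univ L)
    (x y : ℝ) : L x + deriv L x * (y - x) ≤ L y := by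
  rcases lt_trichotomy x y with h | h | h
  · have := hLc.deriv_le_slope (Set.mem_univ x) (Set.mem_univ y) h (hLd x)
    rw [slope_def_field] at this
    have hxy : y - x > 0 := by linarith
    rw [le_div_iff₀ hxy] at this
    nlinarith
  · simp [h]
  · have := hLc.slope_le_deriv (Set.mem_univ y) (Set.mem_univ x) h (hLd x)
    rw [slope_def_field] at this
    have hxy : x - y > 0 := by linarith
    rw [div_le_iff₀ hxy] at this
    nlinarith

/-- Sub-gradient inequality for the perspective function `F(j,m) = m·L(j/m)` of a
differentiable convex Lagrangian `L`, with `F_j = L'(j/m)` and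
`F_m = L(j/m) − (j/m)·L'(j/m)`. -/
theorem perspective_subgradient_inequality
    (L : ℝ → ℝ) (hLd : Differentiable ℝ L) (hLc : ConvexOn ℝ Set.univ L)
    (j j₀ m m₀ : ℝ) (hm : 0 < m) (hm₀ : 0 < m₀) :
    deriv L (j / m) * j₀ + (L (j / m) - (j / m) * deriv L (j / m)) * m₀
      ≤ m₀ * L (j₀ / m₀) := by
  have h := tangent_le L hLd hLc (j / m) (j₀ / m₀)
  have h2 := mul_le_mul_of_nonneg_left h hm₀.le
  have h3 : m₀ * (j₀ / m₀) = j₀ := mul_div_cancel₀ j₀ hm₀.ne'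
  have h4 : m₀ * (deriv L (j / m) * (j₀ / m₀ - j / m))
      = deriv L (j / m) * j₀ - deriv L (j / m) * (j / m) * m₀ := by
    rw [mul_sub, mul_sub, ← mul_assoc, mul_comm m₀ (deriv L (j / m)), mul_assoc, h3]; ring
  nlinarith
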